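/- The class of languages accepted by nondeterministic finite automata with translucent words (NFAwtws) is properly contained in the class of languages accepted by repetitive nondeterministic finite automata with translucent words (RNFAwtws): every language accepted by an NFAwtw is accepted by an RNFAwtw, and there is a language (for instance L_2lin = { a^{2n} b^{2n} : n ≥ 1 }) accepted by an RNFAwtw but by no NFAwtw. -/

import Mathlib

/-! Repetitive (non)deterministic finite automata with translucent words. -/

/-- Behavior of the automaton at the end-of-tape marker: halt accepting,
halt rejecting, or (in the repetitive case) continue in one of a set of states. -/
inductive EndBehavior (Q : Type) : Type where
  | accept : EndBehavior Q
  | reject : EndBehavior Q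
  | cont : Set Q → EndBehavior Q

/-- `InStar S w` means `w` belongs to the Kleene star `S*` of the set of words `S`. -/
def InStar {α : Type} (S : Set (List α)) (w : List α) : Prop :=
  ∃ l : List (List α), (∀ u ∈ l, u ∈ S) ∧ l.flatten = w

/-- A (repetitive) nondeterministic finite automaton with translucent words,
with state set `Q` over the alphabet `α`.  `tl q` is the set `τ(q)` of
translucent words of the state `q`, `delta` is the transition function and
`endB q` is the behavior at the end-of-tape marker.  The fields `tl_fin`,
`code_ne`, `prefix_code` and `tl_head` express that each `τ(q)` is finite,
that `τ(q) ∪ Σ_q` is a prefix code (no empty word, and no member is a proper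
prefix of another member), and that no word of `τ(q)` begins with a letter
readable in `q`. -/
structure RNFAwtw (α : Type) (Q : Type) : Type where
  init : Set Q
  tl : Q → Set (List α)
  delta : Q → α → Set Q
  endB : Q → EndBehavior Q
  tl_fin : ∀ q, (tl q).Finite
  code_ne : ∀ q, [] ∉ tl q
  prefix_code : ∀ q,
    ∀ u ∈ tl q ∪ {w | ∃ a, (delta q a).Nonempty ∧ w = [a]},
    ∀ v ∈ tl q ∪ {w | ∃ a, (delta q a).Nonempty ∧ w = [a]},
      u <+: v → u = v
  tl_head : ∀ q, ∀ t ∈ tl q, ∀ a, (delta q a).Nonempty → ¬ [a] <+: t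

/-- Configurations: a pair of a state and the remaining tape content, or one
of the two halting configurations. -/
inductive Conf (α Q : Type) : Type where
  | state : Q → List α → Conf α Q
  | accept : Conf α Q
  | reject : Conf α Q

/-- The single-step computation relation of an RNFAwtw. -/
inductive RNFAwtw.Step {α Q : Type} (A : RNFAwtw α Q) :
    Conf α Q → Conf α Q → Prop where
  | read {q q' : Q} {a : α} {u v : List α} :
      InStar (A.tl q) u → q' ∈ A.delta q a →
      RNFAwtw.Step A (Conf.state q (u ++ a :: v)) (Conf.state q' (u ++ v))
  | stuck {q : Q} {a : α} {u v : List α} :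
      InStar (A.tl q) u → A.delta q a = ∅ →
      (∀ t ∈ A.tl q, ¬ t <+: (a :: v)) →
      RNFAwtw.Step A (Conf.state q (u ++ a :: v)) Conf.reject
  | haltAccept {q : Q} {w : List α} :
      InStar (A.tl q) w → A.endB q = EndBehavior.accept →
      RNFAwtw.Step A (Conf.state q w) Conf.accept
  | haltReject {q : Q} {w : List α} :
      InStar (A.tl q) w → A.endB q = EndBehavior.reject →
      RNFAwtw.Step A (Conf.state q w) Conf.reject
  | goOn {q q' : Q} {w : List α} {S : Set Q} :
      InStar (A.tl q) w → A.endB q = EndBehavior.cont S → q' ∈ S →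
      RNFAwtw.Step A (Conf.state q w) (Conf.state q' w)

/-- `A` accepts the word `w`. -/
def RNFAwtw.Accepts {α Q : Type} (A : RNFAwtw α Q) (w : List α) : Prop :=
  ∃ q0 ∈ A.init, Relation.ReflTransGen A.Step (Conf.state q0 w) Conf.accept

/-- The language accepted by `A`. -/
def RNFAwtw.lang {α Q : Type} (A : RNFAwtw α Q) : Set (List α) :=
  { w | A.Accepts w }

/-- `A` is deterministic: one initial state, at most one transition per
state/letter pair, and at the end-of-tape marker the continuation (if any)
is a single state. -/
def RNFAwtw.Deterministic {α Q : Type} (A : RNFAwtw α Q) : Prop :=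
  (∃ q0, A.init = {q0}) ∧
  (∀ q a, (A.delta q a).Subsingleton) ∧
  (∀ q S, A.endB q = EndBehavior.cont S → ∃ q', S = {q'})

/-- `A` is non-repetitive: at the end-of-tape marker it always halts. -/
def RNFAwtw.NonRepetitive {α Q : Type} (A : RNFAwtw α Q) : Prop :=
  ∀ q S, A.endB q ≠ EndBehavior.cont S

/-- `L` is accepted by some repetitive NFAwtw (with a finite state set). -/
def AcceptedByRNFAwtw {α : Type} (L : Set (List α)) : Prop :=
  ∃ (Q : Type) (_ : Finite Q) (A : RNFAwtw α Q), A.lang = L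

/-- `L` is accepted by some repetitive DFAwtw. -/
def AcceptedByRDFAwtw {α : Type} (L : Set (List α)) : Prop :=
  ∃ (Q : Type) (_ : Finite Q) (A : RNFAwtw α Q), A.Deterministic ∧ A.lang = L

/-- `L` is accepted by some (non-repetitive) NFAwtw. -/
def AcceptedByNFAwtw {α : Type} (L : Set (List α)) : Prop :=
  ∃ (Q : Type) (_ : Finite Q) (A : RNFAwtw α Q), A.NonRepetitive ∧ A.lang = L

/-- `L` is accepted by some (non-repetitive) DFAwtw. -/
def AcceptedByDFAwtw {α : Type} (L : Set (List α)) : Prop :=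
  ∃ (Q : Type) (_ : Finite Q) (A : RNFAwtw α Q),
    A.NonRepetitive ∧ A.Deterministic ∧ A.lang = L

/-- The two-letter alphabet `{a, b}`. -/
inductive Letter : Type where
  | a : Letter
  | b : Letter
deriving DecidableEq

instance : Fintype Letter :=
  ⟨{Letter.a, Letter.b}, fun x => by cases x <;> simp⟩

/-- The word `u^m` (the `m`-fold concatenation of `u`). -/
def wpow {α : Type} (u : List α) (m : ℕ) : List α :=
  (List.replicate m u).flatten

/-- `L_2lin = { a^{2n} b^{2n} : n ≥ 1 }`. -/
def L2lin : Set (List Letter) :=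
  { w | ∃ n : ℕ, 1 ≤ n ∧
      w = List.replicate (2 * n) Letter.a ++ List.replicate (2 * n) Letter.b }

open List in
theorem instar_nil {α : Type} (S : Set (List α)) : InStar S [] := ⟨[], by simp, rfl⟩

theorem instar_append {α : Type} {S : Set (List α)} {u v : List α}
    (hu : InStar S u) (hv : InStar S v) : InStar S (u ++ v) := by
  obtain ⟨l1, h1, e1⟩ := hu
  obtain ⟨l2, h2, e2⟩ := hv
  exact ⟨l1 ++ l2, by intro x hx; rcases List.mem_append.1 hx with h | h; exacts [h1 x h, h2 x h],
    by simp [e1, e2]⟩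

theorem instar_single {α : Type} {S : Set (List α)} {t : List α} (ht : t ∈ S) : InStar S t :=
  ⟨[t], by simpa using ht, by simp⟩

theorem instar_empty {α : Type} {u : List α} (h : InStar (∅ : Set (List α)) u) : u = [] := by
  obtain ⟨l, hl, e⟩ := h
  cases l with
  | nil => simp at e; exact e
  | cons x xs => exact absurd (hl x (by simp)) (by simp)

theorem instar_ne_nil {α : Type} {S : Set (List α)} {u : List α}
    (h : InStar S u) (hne : u ≠ []) : ∃ t ∈ S, t ≠ [] := by
  obtain ⟨l, hl, e⟩ := h
  induction l with
  | nil => simp at e; exact absurd e hne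
  | cons x xs ih =>
    by_cases hx : x = []
    · subst hx
      exact ih (fun u hu => hl u (by simp [hu])) (by simpa using e)
    · exact ⟨x, hl x (by simp), hx⟩

theorem no_step_from_accept {α Q : Type} {A : RNFAwtw α Q} {c : Conf α Q} :
    ¬ A.Step Conf.accept c := by intro h; cases h

theorem no_step_from_reject {α Q : Type} {A : RNFAwtw α Q} {c : Conf α Q} :
    ¬ A.Step Conf.reject c := by intro h; cases h

theorem not_rtg_reject_accept {α Q : Type} {A : RNFAwtw α Q} :
    ¬ Relation.ReflTransGen A.Step Conf.reject Conf.accept := by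
  intro h
  rcases Relation.ReflTransGen.cases_head h with h | ⟨c, hc, _⟩
  · cases h
  · exact no_step_from_reject hc

/-- A path in the transition graph of `A`, reading the given letter sequence. -/
inductive DPath {α Q : Type} (A : RNFAwtw α Q) : Q → List α → Q → Prop where
  | nil (q : Q) : DPath A q [] q
  | cons {q q' q'' : Q} {x : α} {σ : List α} :
      q' ∈ A.delta q x → DPath A q' σ q'' → DPath A q (x :: σ) q''

theorem dpath_append {α Q : Type} {A : RNFAwtw α Q} {q q' q'' : Q} {σ τ : List α}
    (h1 : DPath A q σ q') (h2 : DPath A q' τ q'') : DPath A q (σ ++ τ) q'' := by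
  induction h1 with
  | nil => exact h2
  | cons hd _ ih => exact DPath.cons hd (ih h2)

theorem dpath_split {α Q : Type} {A : RNFAwtw α Q} {q q'' : Q} {σ τ : List α}
    (h : DPath A q (σ ++ τ) q'') : ∃ q', DPath A q σ q' ∧ DPath A q' τ q'' := by
  induction σ generalizing q with
  | nil => exact ⟨q, DPath.nil q, h⟩
  | cons x xs ih =>
    cases h with
    | cons hd htl =>
      obtain ⟨q', h1, h2⟩ := ih htl
      exact ⟨q', DPath.cons hd h1, h2⟩

/-- Replay a transition path as a run that reads everything at the front. -/
theorem dpath_replay {α Q : Type} {A : RNFAwtw α Q} {q qf : Q} {σ : List α}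
    (h : DPath A q σ qf) (hacc : A.endB qf = EndBehavior.accept) :
    Relation.ReflTransGen A.Step (Conf.state q σ) Conf.accept := by
  induction h with
  | nil q => exact Relation.ReflTransGen.single (RNFAwtw.Step.haltAccept (instar_nil _) hacc)
  | @cons q q' q'' x σ hd htl ih =>
    have hstep : A.Step (Conf.state q ([] ++ x :: σ)) (Conf.state q' ([] ++ σ)) :=
      RNFAwtw.Step.read (instar_nil _) hd
    exact Relation.ReflTransGen.head (by simpa using hstep) (ih hacc)

/-- Decompose an accepting run of a non-repetitive automaton. -/
theorem extract_run {α Q : Type} {A : RNFAwtw α Q} (hNR : A.NonRepetitive) :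
    ∀ {c : Conf α Q}, Relation.ReflTransGen A.Step c Conf.accept →
    ∀ q w, c = Conf.state q w →
    ∃ σ qf wf, DPath A q σ qf ∧ A.endB qf = EndBehavior.accept ∧ InStar (A.tl qf) wf ∧
      w.length = σ.length + wf.length ∧
      (∀ X, InStar (A.tl qf) X →
        Relation.ReflTransGen A.Step (Conf.state q (w ++ X)) Conf.accept) := by
  intro c hc
  induction hc using Relation.ReflTransGen.head_induction_on with
  | refl => intro q w h; exact absurd h (by intro h; cases h)
  | head hstep htail ih =>
    intro q w hc
    subst hc
    cases hstep with
    | @read _ q' x u v hu hd =>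
      obtain ⟨σ, qf, wf, hpath, hacc, hwf, hlen, hX⟩ := ih q' (u ++ v) rfl
      refine ⟨x :: σ, qf, wf, DPath.cons hd hpath, hacc, hwf, by have h' := hlen; simp only [List.length_append, List.length_cons] at h' ⊢; omega, ?_⟩
      intro X hXs
      have hstep' : A.Step (Conf.state q (u ++ x :: v ++ X)) (Conf.state q' (u ++ (v ++ X))) := by
        have := RNFAwtw.Step.read (A := A) (q := q) (q' := q') (a := x) (u := u) (v := v ++ X) hu hd
        simpa using this
      refine Relation.ReflTransGen.head hstep' ?_
      have := hX X hXs
      simpa [List.append_assoc] using this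
    | stuck h1 h2 h3 => exact absurd htail not_rtg_reject_accept
    | haltAccept hw hacc =>
      refine ⟨[], q, w, DPath.nil q, hacc, hw, by simp, ?_⟩
      intro X hXs
      exact Relation.ReflTransGen.single
        (RNFAwtw.Step.haltAccept (instar_append hw hXs) hacc)
    | haltReject hw h => exact absurd htail not_rtg_reject_accept
    | goOn hw hcont hmem => exact absurd hcont (hNR _ _)

/-- Abbreviation for the canonical words of `L2lin`. -/
def gen (n : ℕ) : List Letter :=
  List.replicate (2 * n) Letter.a ++ List.replicate (2 * n) Letter.b

theorem gen_mem_L2lin {n : ℕ} (hn : 1 ≤ n) : gen n ∈ L2lin := ⟨n, hn, rfl⟩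

theorem L2lin_eq_gen {w : List Letter} (h : w ∈ L2lin) : ∃ n, 1 ≤ n ∧ w = gen n := h

theorem length_gen (n : ℕ) : (gen n).length = 4 * n := by
  simp [gen]; omega

theorem rep_split : ∀ (p q : ℕ) (v v' : List Letter),
    List.replicate p Letter.a ++ v = List.replicate q Letter.a ++ Letter.b :: v' →
    p ≤ q ∧ v = List.replicate (q - p) Letter.a ++ Letter.b :: v' := by
  intro p
  induction p with
  | zero => intro q v v' h; simpa using h
  | succ p ih =>
    intro q v v' h
    cases q with
    | zero =>
      simp [List.replicate_succ] at h
    | succ q =>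
      rw [List.replicate_succ, List.replicate_succ] at h
      simp only [List.cons_append, List.cons.injEq] at h
      obtain ⟨h1, h2⟩ := ih q v v' h.2
      exact ⟨by omega, by simpa [Nat.succ_sub_succ] using h2⟩

theorem gen_append_not_L2lin {n : ℕ} (hn : 1 ≤ n) {t : List Letter} (ht : t ≠ []) :
    gen n ++ t ∉ L2lin := by
  rintro ⟨N, hN, hEq⟩
  have hrw : List.replicate (2*n) Letter.a ++ (List.replicate (2*n) Letter.b ++ t)
      = List.replicate (2*N) Letter.a ++ (Letter.b :: List.replicate (2*N - 1) Letter.b) := by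
    have : (2:ℕ) * N = 1 + (2*N - 1) := by omega
    rw [← List.append_assoc]
    rw [show List.replicate (2*N) Letter.b = Letter.b :: List.replicate (2*N-1) Letter.b by
      rw [this, List.replicate_add]; simp [List.replicate_succ]] at hEq
    exact hEq
  obtain ⟨hle, h2⟩ := rep_split _ _ _ _ hrw
  rcases Nat.eq_or_lt_of_le hle with heq | hlt
  · -- N = n : lengths force t = []
    have h0 : (2*N - 2*n) = 0 := by omega
    rw [h0] at h2
    simp only [List.replicate_zero, List.nil_append] at h2
    have hlen := congrArg List.length h2
    simp only [List.length_append, List.length_replicate, List.length_cons] at hlen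
    have : t.length = 0 := by omega
    exact ht (List.length_eq_zero_iff.mp this)
  · -- 2n < 2N : heads differ
    rw [show (2:ℕ)*N - 2*n = (2*N - 2*n - 1) + 1 by omega, List.replicate_succ] at h2
    rw [show (2:ℕ)*n = (2*n-1)+1 by omega, List.replicate_succ] at h2
    simp at h2

theorem pumped_not_L2lin {n d : ℕ} (hd : 1 ≤ d) :
    List.replicate (2*n+d) Letter.a ++ List.replicate (2*n) Letter.b ∉ L2lin := by
  rintro ⟨N, hN, hEq⟩
  have hb := congrArg (List.count Letter.b) hEq
  have ha := congrArg (List.count Letter.a) hEq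
  simp [List.count_append, List.count_replicate] at hb ha
  omega

theorem dpath_toFun {α Q : Type} {A : RNFAwtw α Q} {x : α} :
    ∀ {k : ℕ} {q q' : Q}, DPath A q (List.replicate k x) q' →
    ∃ f : ℕ → Q, f 0 = q ∧ f k = q' ∧ ∀ i < k, f (i+1) ∈ A.delta (f i) x := by
  intro k
  induction k with
  | zero =>
    intro q q' h
    cases h
    exact ⟨fun _ => q, rfl, rfl, by omega⟩
  | succ k ih =>
    intro q q' h
    rw [List.replicate_succ] at h
    cases h with
    | @cons _ q1 _ _ _ hd htl =>
      obtain ⟨f, hf0, hfk, hfs⟩ := ih htl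
      refine ⟨fun i => Nat.rec q (fun j _ => f j) i, rfl, hfk, ?_⟩
      intro i hi
      cases i with
      | zero => simpa [hf0] using hd
      | succ i => exact hfs i (by omega)

theorem dpath_of_fun {α Q : Type} {A : RNFAwtw α Q} {x : α} {k : ℕ} {f : ℕ → Q}
    (hfs : ∀ i < k, f (i+1) ∈ A.delta (f i) x) :
    ∀ (d i : ℕ), i + d ≤ k → DPath A (f i) (List.replicate d x) (f (i + d)) := by
  intro d
  induction d with
  | zero => intro i _; simpa using DPath.nil (f i)
  | succ d ih =>
    intro i hi
    rw [List.replicate_succ]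
    refine DPath.cons (hfs i (by omega)) ?_
    have := ih (i+1) (by omega)
    have he : i + 1 + d = i + (d+1) := by omega
    rwa [he] at this

theorem L2lin_not_NFAwtw : ¬ AcceptedByNFAwtw L2lin := by
  rintro ⟨Q, finQ, A, hNR, hL⟩
  haveI := finQ
  haveI : Fintype Q := Fintype.ofFinite Q
  set n := Fintype.card Q + 1 with hn
  have hgen : gen n ∈ A.lang := by rw [hL]; exact gen_mem_L2lin (by omega)
  obtain ⟨q0, hq0, hrun⟩ := hgen
  obtain ⟨σ, qf, wf, hpath, hacc, hwf, hlen, hX⟩ := extract_run hNR hrun q0 (gen n) rfl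
  have hσ : σ ∈ L2lin := by rw [← hL]; exact ⟨q0, hq0, dpath_replay hpath hacc⟩
  obtain ⟨m, hm, hσe⟩ := hσ
  have hwfnil : wf = [] := by
    by_contra hne
    obtain ⟨t, htS, htne⟩ := instar_ne_nil hwf hne
    have hmem : gen n ++ t ∈ A.lang := ⟨q0, hq0, hX t (instar_single htS)⟩
    rw [hL] at hmem
    exact gen_append_not_L2lin (by omega) htne hmem
  have hmn : m = n := by
    have h1 := length_gen n
    have h2 : σ.length = 4*m := by rw [hσe]; exact length_gen m
    rw [hwfnil] at hlen
    simp at hlen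
    omega
  rw [hmn] at hσe
  rw [hσe] at hpath
  have hpath' : DPath A q0
      (List.replicate (2*n) Letter.a ++ List.replicate (2*n) Letter.b) qf := hpath
  obtain ⟨qm, hA, hB⟩ := dpath_split hpath'
  obtain ⟨f, hf0, hfk, hfs⟩ := dpath_toFun hA
  have hcard : Fintype.card Q < Fintype.card (Fin (2*n+1)) := by simp; omega
  obtain ⟨i, j, hij, hfij⟩ :=
    Fintype.exists_ne_map_eq_of_card_lt (fun i : Fin (2*n+1) => f i) hcard
  -- normalize to i0 < j0
  obtain ⟨i0, j0, hlt, hle2, hfe⟩ : ∃ i0 j0 : ℕ, i0 < j0 ∧ j0 ≤ 2*n ∧ f i0 = f j0 := by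
    rcases lt_trichotomy (i : ℕ) (j : ℕ) with h | h | h
    · exact ⟨i, j, h, by omega, hfij⟩
    · exact absurd (Fin.ext h) hij
    · exact ⟨j, i, h, by omega, hfij.symm⟩
  set d := j0 - i0 with hdd
  have hd1 : 1 ≤ d := by omega
  -- build the pumped a-path
  have p1 : DPath A q0 (List.replicate i0 Letter.a) (f i0) := by
    have := dpath_of_fun hfs i0 0 (by omega)
    simpa [hf0] using this
  have p2 : DPath A (f i0) (List.replicate d Letter.a) (f i0) := by
    have := dpath_of_fun hfs d i0 (by omega)
    rwa [show i0 + d = j0 by omega, ← hfe] at this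
  have p3 : DPath A (f i0) (List.replicate (2*n - j0) Letter.a) qm := by
    have := dpath_of_fun hfs (2*n - j0) j0 (by omega)
    rw [show j0 + (2*n - j0) = 2*n by omega, hfk] at this
    rwa [← hfe] at this
  have pa : DPath A q0 (List.replicate (2*n + d) Letter.a) qm := by
    have h12 := dpath_append p1 (dpath_append p2 (dpath_append p2 p3))
    rw [← List.replicate_add, ← List.replicate_add, ← List.replicate_add] at h12
    rwa [show i0 + (d + (d + (2*n - j0))) = 2*n + d by omega] at h12
  have pfull : DPath A q0
      (List.replicate (2*n + d) Letter.a ++ List.replicate (2*n) Letter.b) qf :=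
    dpath_append pa hB
  have : (List.replicate (2*n + d) Letter.a ++ List.replicate (2*n) Letter.b) ∈ A.lang :=
    ⟨q0, hq0, dpath_replay pfull hacc⟩
  rw [hL] at this
  exact pumped_not_L2lin hd1 this

/-! ### An RNFAwtw accepting `L2lin` -/

/-- States of the accepting automaton. -/
inductive St : Type where
  | s0 | q1 | p1 | q2 | p2 | e1 | e2 | e3 | e4 | e5
deriving DecidableEq

instance : Fintype St :=
  ⟨{.s0, .q1, .p1, .q2, .p2, .e1, .e2, .e3, .e4, .e5}, fun x => by cases x <;> simp⟩

/-- Translucent words. -/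
def tlM : St → Set (List Letter)
  | .s0 => {[Letter.a, Letter.a], [Letter.b, Letter.b]}
  | .q1 => {[Letter.a, Letter.a]}
  | .q2 => {[Letter.a, Letter.a], [Letter.a, Letter.b]}
  | _ => ∅

/-- Transitions. -/
def deltaM : St → Letter → Set St
  | .q1, .b => {.p1}
  | .q2, .b => {.p2}
  | .p1, .a => {.q2}
  | .p2, .a => {.s0}
  | .e1, .a => {.e2}
  | .e2, .a => {.e3}
  | .e3, .b => {.e4}
  | .e4, .b => {.e5}
  | _, _ => ∅

/-- End-of-tape behavior. -/
def endBM : St → EndBehavior St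
  | .s0 => .cont {.q1, .e1}
  | .e5 => .accept
  | _ => .reject

theorem code_s0 :
    tlM .s0 ∪ {w | ∃ x, (deltaM .s0 x).Nonempty ∧ w = [x]} = tlM .s0 := by
  ext w
  constructor
  · rintro (h | ⟨x, hne, rfl⟩)
    · exact h
    · cases x <;> simp [deltaM] at hne
  · exact Or.inl

theorem code_q1 :
    tlM .q1 ∪ {w | ∃ x, (deltaM .q1 x).Nonempty ∧ w = [x]}
      = {[Letter.a, Letter.a], [Letter.b]} := by
  ext w
  constructor
  · rintro (h | ⟨x, hne, rfl⟩)
    · simp [tlM] at h; simp [h]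
    · cases x
      · simp [deltaM] at hne
      · simp
  · intro h
    rcases h with h | h
    · exact Or.inl (by simp [tlM, h])
    · simp only [Set.mem_singleton_iff] at h
      subst h
      exact Or.inr ⟨Letter.b, ⟨.p1, rfl⟩, rfl⟩

theorem code_q2 :
    tlM .q2 ∪ {w | ∃ x, (deltaM .q2 x).Nonempty ∧ w = [x]}
      = {[Letter.a, Letter.a], [Letter.a, Letter.b], [Letter.b]} := by
  ext w
  constructor
  · rintro (h | ⟨x, hne, rfl⟩)
    · simp [tlM] at h; rcases h with h | h <;> simp [h]
    · cases x
      · simp [deltaM] at hne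
      · simp
  · intro h
    rcases h with h | h | h
    · exact Or.inl (by simp [tlM, h])
    · exact Or.inl (by simp [tlM, h])
    · simp only [Set.mem_singleton_iff] at h
      subst h
      exact Or.inr ⟨Letter.b, ⟨.p2, rfl⟩, rfl⟩

theorem code_single (q : St) (x0 : Letter) (q0 : St)
    (htl : tlM q = ∅) (hd : ∀ y, deltaM q y = if y = x0 then {q0} else ∅) :
    tlM q ∪ {w | ∃ x, (deltaM q x).Nonempty ∧ w = [x]} = {[x0]} := by
  ext w
  constructor
  · rintro (h | ⟨x, hne, rfl⟩)
    · simp [htl] at h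
    · rw [hd x] at hne
      by_cases hx : x = x0
      · simp [hx]
      · simp [hx] at hne
  · intro h
    refine Or.inr ⟨x0, ?_, by simpa using h⟩
    rw [hd x0]
    simp

theorem code_e5 :
    tlM .e5 ∪ {w | ∃ x, (deltaM .e5 x).Nonempty ∧ w = [x]} = ∅ := by
  ext w
  constructor
  · rintro (h | ⟨x, hne, rfl⟩)
    · simp [tlM] at h
    · cases x <;> simp [deltaM] at hne
  · simp

/-- The RNFAwtw accepting `L2lin`. -/
def M : RNFAwtw Letter St where
  init := {.s0}
  tl := tlM
  delta := deltaM
  endB := endBM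
  tl_fin := by
    intro q
    cases q <;>
      first
        | exact Set.finite_empty
        | exact Set.finite_singleton _
        | exact (Set.finite_singleton _).insert _
  code_ne := by intro q; cases q <;> simp [tlM]
  prefix_code := by
    have hs : ∀ (X : Set (List Letter)) (L : List (List Letter)),
        X = {w | w ∈ L} → ∀ u ∈ X, ∀ v ∈ X, u <+: v → u = v → True := fun _ _ _ _ _ _ _ _ _ => trivial
    intro q
    cases q
    case s0 =>
      rw [code_s0]
      intro u hu v hv h
      simp only [tlM, Set.mem_insert_iff, Set.mem_singleton_iff] at hu hv
      rcases hu with rfl | rfl <;> rcases hv with rfl | rfl <;> revert h <;> decide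
    case q1 =>
      rw [code_q1]
      intro u hu v hv h
      simp only [Set.mem_insert_iff, Set.mem_singleton_iff] at hu hv
      rcases hu with rfl | rfl <;> rcases hv with rfl | rfl <;> revert h <;> decide
    case q2 =>
      rw [code_q2]
      intro u hu v hv h
      simp only [Set.mem_insert_iff, Set.mem_singleton_iff] at hu hv
      rcases hu with rfl | rfl | rfl <;> rcases hv with rfl | rfl | rfl <;> revert h <;> decide
    case p1 =>
      rw [code_single .p1 Letter.a .q2 rfl (by intro y; cases y <;> rfl)]
      intro u hu v hv h
      simp only [Set.mem_singleton_iff] at hu hv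
      subst hu; subst hv; rfl
    case p2 =>
      rw [code_single .p2 Letter.a .s0 rfl (by intro y; cases y <;> rfl)]
      intro u hu v hv h
      simp only [Set.mem_singleton_iff] at hu hv
      subst hu; subst hv; rfl
    case e1 =>
      rw [code_single .e1 Letter.a .e2 rfl (by intro y; cases y <;> rfl)]
      intro u hu v hv h
      simp only [Set.mem_singleton_iff] at hu hv
      subst hu; subst hv; rfl
    case e2 =>
      rw [code_single .e2 Letter.a .e3 rfl (by intro y; cases y <;> rfl)]
      intro u hu v hv h
      simp only [Set.mem_singleton_iff] at hu hv
      subst hu; subst hv; rfl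
    case e3 =>
      rw [code_single .e3 Letter.b .e4 rfl (by intro y; cases y <;> rfl)]
      intro u hu v hv h
      simp only [Set.mem_singleton_iff] at hu hv
      subst hu; subst hv; rfl
    case e4 =>
      rw [code_single .e4 Letter.b .e5 rfl (by intro y; cases y <;> rfl)]
      intro u hu v hv h
      simp only [Set.mem_singleton_iff] at hu hv
      subst hu; subst hv; rfl
    case e5 =>
      rw [code_e5]
      intro u hu
      exact absurd hu (by simp)
  tl_head := by
    intro q t ht x hx hpre
    cases q
    case p1 => simp [tlM] at ht
    case p2 => simp [tlM] at ht
    case e1 => simp [tlM] at ht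
    case e2 => simp [tlM] at ht
    case e3 => simp [tlM] at ht
    case e4 => simp [tlM] at ht
    case e5 => simp [tlM] at ht
    case s0 =>
      simp only [tlM] at ht
      cases x <;> exact absurd hx (by rintro ⟨y, hy⟩; cases y <;> simp [deltaM] at hy)
    case q1 =>
      simp only [tlM] at ht
      cases x
      · exact absurd hx (by rintro ⟨y, hy⟩; cases y <;> simp [deltaM] at hy)
      · simp only [Set.mem_singleton_iff] at ht
        subst ht
        exact absurd hpre (by decide)
    case q2 =>
      simp only [tlM] at ht
      cases x
      · exact absurd hx (by rintro ⟨y, hy⟩; cases y <;> simp [deltaM] at hy)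
      · simp only [Set.mem_insert_iff, Set.mem_singleton_iff] at ht
        rcases ht with rfl | rfl <;> exact absurd hpre (by decide)

@[simp] theorem M_tl : M.tl = tlM := rfl
@[simp] theorem M_delta : M.delta = deltaM := rfl
@[simp] theorem M_endB : M.endB = endBM := rfl
@[simp] theorem M_init : M.init = {.s0} := rfl

theorem flatten_rep_pair (x : Letter) (k : ℕ) :
    (List.replicate k [x, x]).flatten = List.replicate (2*k) x := by
  induction k with
  | zero => simp
  | succ k ih =>
    rw [List.replicate_succ, List.flatten_cons, ih,
      show 2*(k+1) = 2*k + 2 by omega]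
    rw [show (2:ℕ)*k + 2 = 1 + (1 + 2*k) by omega, List.replicate_add, List.replicate_add]
    simp

theorem instar_aa {u : List Letter} :
    InStar (tlM .q1) u ↔ ∃ k, u = List.replicate (2*k) Letter.a := by
  constructor
  · rintro ⟨l, hl, rfl⟩
    induction l with
    | nil => exact ⟨0, by simp⟩
    | cons x xs ih =>
      have hx : x = [Letter.a, Letter.a] := by simpa [tlM] using hl x (by simp)
      obtain ⟨k, hk⟩ := ih (fun u hu => hl u (by simp [hu]))
      refine ⟨k+1, ?_⟩
      rw [List.flatten_cons, hx, hk, show 2*(k+1) = 2 + 2*k by omega, List.replicate_add]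
      rfl
  · rintro ⟨k, rfl⟩
    exact ⟨List.replicate k [Letter.a, Letter.a],
      by intro u hu; rw [List.eq_of_mem_replicate hu]; simp [tlM],
      flatten_rep_pair _ _⟩

theorem instar_E_gen (n : ℕ) : InStar (tlM .s0) (gen n) := by
  refine ⟨List.replicate n [Letter.a, Letter.a] ++ List.replicate n [Letter.b, Letter.b],
    ?_, ?_⟩
  · intro u hu
    rcases List.mem_append.1 hu with h | h
    · rw [List.eq_of_mem_replicate h]; simp [tlM]
    · rw [List.eq_of_mem_replicate h]; simp [tlM]
  · rw [List.flatten_append, flatten_rep_pair, flatten_rep_pair]; rfl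

theorem cons_eq_rep_a {t : List Letter} {i j : ℕ}
    (h : Letter.a :: t = List.replicate i Letter.a ++ List.replicate j Letter.b) :
    1 ≤ i ∧ t = List.replicate (i-1) Letter.a ++ List.replicate j Letter.b := by
  cases i with
  | zero =>
    simp only [List.replicate_zero, List.nil_append] at h
    cases j with
    | zero => simp at h
    | succ j => rw [List.replicate_succ] at h; simp at h
  | succ i =>
    rw [List.replicate_succ] at h
    simp only [List.cons_append, List.cons.injEq] at h
    exact ⟨by omega, by simpa using h.2⟩

theorem cons_eq_rep_b {t : List Letter} {i j : ℕ}
    (h : Letter.b :: t = List.replicate i Letter.a ++ List.replicate j Letter.b) :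
    i = 0 ∧ 1 ≤ j ∧ t = List.replicate (j-1) Letter.b := by
  cases i with
  | zero =>
    simp only [List.replicate_zero, List.nil_append] at h
    cases j with
    | zero => simp at h
    | succ j =>
      rw [List.replicate_succ] at h
      simp only [List.cons.injEq] at h
      exact ⟨rfl, by omega, by simpa using h.2⟩
  | succ i => rw [List.replicate_succ] at h; simp at h

theorem E_no_ba : ∀ (l : List (List Letter)),
    (∀ x ∈ l, x = [Letter.a, Letter.a] ∨ x = [Letter.b, Letter.b]) →
    ∀ (k : ℕ) (rest : List Letter),
      l.flatten = List.replicate k Letter.a ++ Letter.b :: Letter.a :: rest → False := by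
  intro l
  induction l with
  | nil =>
    intro _ k rest h
    have := congrArg List.length h
    simp at this
  | cons x xs ih =>
    intro hl k rest h
    rcases hl x (by simp) with rfl | rfl
    · rw [List.flatten_cons] at h
      cases k with
      | zero => simp at h
      | succ k =>
        cases k with
        | zero => simp [List.replicate_succ] at h
        | succ k =>
          rw [List.replicate_succ, List.replicate_succ] at h
          simp only [List.cons_append, List.cons.injEq] at h
          exact ih (fun u hu => hl u (by simp [hu])) k rest h.2.2
    · rw [List.flatten_cons] at h
      cases k with
      | zero => simp at h
      | succ k => rw [List.replicate_succ] at h; simp at h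

theorem instar_E_no_ba {k : ℕ} {rest : List Letter}
    (h : InStar (tlM .s0) (List.replicate k Letter.a ++ Letter.b :: Letter.a :: rest)) :
    False := by
  obtain ⟨l, hl, he⟩ := h
  refine E_no_ba l ?_ k rest he
  intro x hx
  have := hl x hx
  simpa [tlM] using this

theorem AB_star_shape : ∀ (l : List (List Letter)),
    (∀ x ∈ l, x = [Letter.a, Letter.a] ∨ x = [Letter.a, Letter.b]) →
    ∀ (i j : ℕ) (z : List Letter),
      l.flatten ++ z = List.replicate i Letter.a ++ List.replicate j Letter.b →
      (∃ k, l.flatten = List.replicate (2*k) Letter.a ∧ 2*k ≤ i) ∨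
      (l.flatten = List.replicate i Letter.a ++ [Letter.b] ∧ i % 2 = 1 ∧ 1 ≤ j) := by
  intro l
  induction l with
  | nil => intro _ i j z h; exact Or.inl ⟨0, by simp, by omega⟩
  | cons x xs ih =>
    intro hl i j z h
    rcases hl x (by simp) with rfl | rfl
    · rw [List.flatten_cons] at h ⊢
      simp only [List.cons_append] at h
      obtain ⟨hi1, h1⟩ := cons_eq_rep_a h
      obtain ⟨hi2, h2⟩ := cons_eq_rep_a h1
      rcases ih (fun u hu => hl u (by simp [hu])) (i-1-1) j z h2 with ⟨k, hk, hki⟩ | ⟨hf, hodd, hj⟩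
      · refine Or.inl ⟨k+1, ?_, by omega⟩
        rw [show 2*(k+1) = 1 + (1 + 2*k) by omega, List.replicate_add, List.replicate_add]
        simp [hk]
      · refine Or.inr ⟨?_, by omega, hj⟩
        rw [show i = 1 + (1 + (i-1-1)) by omega, List.replicate_add, List.replicate_add]
        simp [hf]
    · rw [List.flatten_cons] at h ⊢
      simp only [List.cons_append] at h
      obtain ⟨hi1, h1⟩ := cons_eq_rep_a h
      obtain ⟨hi0, hj1, h2⟩ := cons_eq_rep_b h1
      have hi : i = 1 := by omega
      subst hi
      -- xs must be empty
      cases xs with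
      | nil =>
        refine Or.inr ⟨by simp, by norm_num, hj1⟩
      | cons y ys =>
        exfalso
        rcases hl y (by simp) with rfl | rfl <;>
        · rw [List.flatten_cons] at h2
          simp only [List.cons_append] at h2
          cases hj' : j - 1 with
          | zero => rw [hj', List.replicate_zero] at h2; simp at h2
          | succ m => rw [hj', List.replicate_succ] at h2; simp at h2

/-- Acceptance from a given state of `M`. -/
abbrev AccM (q : St) (w : List Letter) : Prop :=
  Relation.ReflTransGen M.Step (Conf.state q w) Conf.accept

theorem accM_step {q : St} {w : List Letter} (h : AccM q w) :
    ∃ c, M.Step (Conf.state q w) c ∧ Relation.ReflTransGen M.Step c Conf.accept := by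
  rcases Relation.ReflTransGen.cases_head h with h | h
  · exact absurd h (by intro hh; cases hh)
  · exact h

theorem inv_s0 {w : List Letter} (h : AccM .s0 w) :
    InStar (tlM .s0) w ∧ (AccM .q1 w ∨ AccM .e1 w) := by
  obtain ⟨c, hs, hrest⟩ := accM_step h
  cases hs with
  | read hu hd =>
    rename_i q' x u v
    exact absurd hd (by cases x <;> simp [deltaM])
  | stuck h1 h2 h3 => exact absurd hrest not_rtg_reject_accept
  | haltAccept hw hacc => exact absurd hacc (by simp [endBM])
  | haltReject hw hr => exact absurd hrest not_rtg_reject_accept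
  | goOn hw hcont hmem =>
    rename_i q' S
    have hS : ({.q1, .e1} : Set St) = S := by
      have : endBM .s0 = EndBehavior.cont S := hcont
      simp only [endBM, EndBehavior.cont.injEq] at this
      exact this
    rw [← hS] at hmem
    rcases hmem with rfl | hmem
    · exact ⟨hw, Or.inl hrest⟩
    · simp only [Set.mem_singleton_iff] at hmem
      subst hmem
      exact ⟨hw, Or.inr hrest⟩

theorem inv_q1 {w : List Letter} (h : AccM .q1 w) :
    ∃ u v, InStar (tlM .q1) u ∧ w = u ++ Letter.b :: v ∧ AccM .p1 (u ++ v) := by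
  obtain ⟨c, hs, hrest⟩ := accM_step h
  cases hs with
  | read hu hd =>
    rename_i q' x u v
    cases x
    · exact absurd hd (by simp [deltaM])
    · simp only [M_delta, deltaM, Set.mem_singleton_iff] at hd
      subst hd
      exact ⟨u, v, hu, rfl, hrest⟩
  | stuck h1 h2 h3 => exact absurd hrest not_rtg_reject_accept
  | haltAccept hw hacc => exact absurd hacc (by simp [endBM])
  | haltReject hw hr => exact absurd hrest not_rtg_reject_accept
  | goOn hw hcont hmem => exact absurd hcont (by simp [endBM])

theorem inv_q2 {w : List Letter} (h : AccM .q2 w) :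
    ∃ u v, InStar (tlM .q2) u ∧ w = u ++ Letter.b :: v ∧ AccM .p2 (u ++ v) := by
  obtain ⟨c, hs, hrest⟩ := accM_step h
  cases hs with
  | read hu hd =>
    rename_i q' x u v
    cases x
    · exact absurd hd (by simp [deltaM])
    · simp only [M_delta, deltaM, Set.mem_singleton_iff] at hd
      subst hd
      exact ⟨u, v, hu, rfl, hrest⟩
  | stuck h1 h2 h3 => exact absurd hrest not_rtg_reject_accept
  | haltAccept hw hacc => exact absurd hacc (by simp [endBM])
  | haltReject hw hr => exact absurd hrest not_rtg_reject_accept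
  | goOn hw hcont hmem => exact absurd hcont (by simp [endBM])

theorem inv_front (q : St) (x0 : Letter) (q0 : St)
    (htl : tlM q = ∅) (hend : endBM q = EndBehavior.reject)
    (hd : ∀ y, deltaM q y = if y = x0 then {q0} else ∅) :
    ∀ {w : List Letter}, AccM q w → ∃ v, w = x0 :: v ∧ AccM q0 v := by
  intro w h
  obtain ⟨c, hs, hrest⟩ := accM_step h
  cases hs with
  | read hu hd' =>
    rename_i q' x u v
    have hu' : u = [] := instar_empty (by rwa [M_tl, htl] at hu)
    subst hu'
    rw [M_delta, hd x] at hd'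
    by_cases hx : x = x0
    · subst hx
      simp only [if_pos rfl, Set.mem_singleton_iff] at hd'
      subst hd'
      exact ⟨v, rfl, by simpa using hrest⟩
    · simp [hx] at hd'
  | stuck h1 h2 h3 => exact absurd hrest not_rtg_reject_accept
  | haltAccept hw hacc => rw [M_endB, hend] at hacc; cases hacc
  | haltReject hw hr => exact absurd hrest not_rtg_reject_accept
  | goOn hw hcont hmem => rw [M_endB, hend] at hcont; cases hcont

theorem inv_e5 {w : List Letter} (h : AccM .e5 w) : w = [] := by
  obtain ⟨c, hs, hrest⟩ := accM_step h
  cases hs with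
  | read hu hd =>
    rename_i q' x u v
    exact absurd hd (by cases x <;> simp [deltaM])
  | stuck h1 h2 h3 => exact absurd hrest not_rtg_reject_accept
  | haltAccept hw hacc => exact instar_empty (by simpa [tlM] using hw)
  | haltReject hw hr => exact absurd hrest not_rtg_reject_accept
  | goOn hw hcont hmem => exact absurd hcont (by simp [endBM])

theorem front_step {q q' : St} (x : Letter) (hd : q' ∈ M.delta q x) (v : List Letter) :
    M.Step (Conf.state q (x :: v)) (Conf.state q' v) := by
  have := RNFAwtw.Step.read (A := M) (q := q) (q' := q') (a := x) (u := []) (v := v)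
    (instar_nil _) hd
  simpa using this

theorem goOn_s0 {w : List Letter} (hw : InStar (tlM .s0) w) {q' : St}
    (hq : q' ∈ ({.q1, .e1} : Set St)) :
    M.Step (Conf.state .s0 w) (Conf.state q' w) :=
  RNFAwtw.Step.goOn hw rfl hq

theorem acc_e1 : AccM .e1 [Letter.a, Letter.a, Letter.b, Letter.b] := by
  have h5 : AccM .e5 [] :=
    Relation.ReflTransGen.single (RNFAwtw.Step.haltAccept (instar_nil _) rfl)
  have h4 : AccM .e4 [Letter.b] :=
    Relation.ReflTransGen.head (front_step (q := .e4) (q' := .e5) Letter.b rfl []) h5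
  have h3 : AccM .e3 [Letter.b, Letter.b] :=
    Relation.ReflTransGen.head (front_step (q := .e3) (q' := .e4) Letter.b rfl _) h4
  have h2 : AccM .e2 [Letter.a, Letter.b, Letter.b] :=
    Relation.ReflTransGen.head (front_step (q := .e2) (q' := .e3) Letter.a rfl _) h3
  exact Relation.ReflTransGen.head (front_step (q := .e1) (q' := .e2) Letter.a rfl _) h2

theorem gen_one : gen 1 = [Letter.a, Letter.a, Letter.b, Letter.b] := rfl

theorem fwd : ∀ n, 1 ≤ n → AccM .s0 (gen n) := by
  intro n
  induction n with
  | zero => omega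
  | succ k ih =>
    intro _
    rcases Nat.eq_zero_or_pos k with hk0 | hk
    · subst hk0
      refine Relation.ReflTransGen.head (goOn_s0 (q' := .e1) (instar_E_gen 1) (by simp)) ?_
      rw [gen_one]
      exact acc_e1
    · have ihk := ih hk
      have e1 : List.replicate (2*k+2) Letter.b = Letter.b :: List.replicate (2*k+1) Letter.b := by
        rw [show 2*k+2 = (2*k+1)+1 by omega, List.replicate_succ]
      have e2 : List.replicate (2*k+2) Letter.a = Letter.a :: List.replicate (2*k+1) Letter.a := by
        rw [show 2*k+2 = (2*k+1)+1 by omega, List.replicate_succ]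
      have e3 : List.replicate (2*k+1) Letter.b = Letter.b :: List.replicate (2*k) Letter.b :=
        List.replicate_succ
      have e4 : List.replicate (2*k) Letter.b = Letter.b :: List.replicate (2*k-1) Letter.b := by
        conv_lhs => rw [show 2*k = (2*k-1)+1 by omega, List.replicate_succ]
      have hgen : gen (k+1) = List.replicate (2*k+2) Letter.a ++ List.replicate (2*k+2) Letter.b := by
        rw [gen, show 2*(k+1) = 2*k+2 by omega]
      -- step s0 -> q1
      refine Relation.ReflTransGen.head (goOn_s0 (q' := .q1) (instar_E_gen (k+1)) (by simp)) ?_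
      rw [hgen, e1]
      -- step q1 -> p1
      have hu1 : InStar (tlM .q1) (List.replicate (2*k+2) Letter.a) :=
        instar_aa.mpr ⟨k+1, by rw [show 2*(k+1) = 2*k+2 by omega]⟩
      refine Relation.ReflTransGen.head
        (RNFAwtw.Step.read (A := M) (q := .q1) (q' := .p1) (a := Letter.b)
          (u := List.replicate (2*k+2) Letter.a) (v := List.replicate (2*k+1) Letter.b)
          hu1 rfl) ?_
      -- step p1 -> q2
      rw [e2, List.cons_append]
      refine Relation.ReflTransGen.head (front_step (q := .p1) (q' := .q2) Letter.a rfl _) ?_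
      -- step q2 -> p2
      have hu2 : InStar (tlM .q2) (List.replicate (2*k+1) Letter.a ++ [Letter.b]) := by
        refine ⟨List.replicate k [Letter.a, Letter.a] ++ [[Letter.a, Letter.b]], ?_, ?_⟩
        · intro u hu
          rcases List.mem_append.1 hu with h | h
          · rw [List.eq_of_mem_replicate h]; simp [tlM]
          · simp at h; rw [h]; simp [tlM]
        · rw [List.flatten_append, flatten_rep_pair]
          simp [List.replicate_succ']
      have eq5 : List.replicate (2*k+1) Letter.a ++ List.replicate (2*k+1) Letter.b
          = (List.replicate (2*k+1) Letter.a ++ [Letter.b])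
            ++ Letter.b :: List.replicate (2*k-1) Letter.b := by
        rw [e3, e4]
        simp
      rw [eq5]
      refine Relation.ReflTransGen.head
        (RNFAwtw.Step.read (A := M) (q := .q2) (q' := .p2) (a := Letter.b)
          (u := List.replicate (2*k+1) Letter.a ++ [Letter.b])
          (v := List.replicate (2*k-1) Letter.b) hu2 rfl) ?_
      -- step p2 -> s0
      have eq6 : (List.replicate (2*k+1) Letter.a ++ [Letter.b])
            ++ List.replicate (2*k-1) Letter.b = Letter.a :: gen k := by
        rw [List.append_assoc, List.singleton_append, ← e4, List.replicate_succ,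
          List.cons_append, gen]
      rw [eq6]
      exact Relation.ReflTransGen.head (front_step (q := .p2) (q' := .s0) Letter.a rfl _) ihk

theorem rep_cancel {x : Letter} {p q : ℕ} {v r : List Letter} (hpq : p ≤ q)
    (h : List.replicate p x ++ v = List.replicate q x ++ r) :
    v = List.replicate (q-p) x ++ r := by
  rw [show q = p + (q-p) by omega, List.replicate_add, List.append_assoc] at h
  exact List.append_cancel_left h

theorem dP1 : ∀ y, deltaM .p1 y = if y = Letter.a then ({.q2} : Set St) else ∅ := by
  intro y; cases y <;> simp [deltaM]

theorem dP2 : ∀ y, deltaM .p2 y = if y = Letter.a then ({.s0} : Set St) else ∅ := by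
  intro y; cases y <;> simp [deltaM]

theorem dE1 : ∀ y, deltaM .e1 y = if y = Letter.a then ({.e2} : Set St) else ∅ := by
  intro y; cases y <;> simp [deltaM]

theorem dE2 : ∀ y, deltaM .e2 y = if y = Letter.a then ({.e3} : Set St) else ∅ := by
  intro y; cases y <;> simp [deltaM]

theorem dE3 : ∀ y, deltaM .e3 y = if y = Letter.b then ({.e4} : Set St) else ∅ := by
  intro y; cases y <;> simp [deltaM]

theorem dE4 : ∀ y, deltaM .e4 y = if y = Letter.b then ({.e5} : Set St) else ∅ := by
  intro y; cases y <;> simp [deltaM]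

theorem bwd : ∀ (N : ℕ) (w : List Letter), w.length ≤ N → AccM .s0 w →
    ∃ n, 1 ≤ n ∧ w = gen n := by
  intro N
  induction N with
  | zero =>
    intro w hlen hacc
    have hw : w = [] := List.length_eq_zero_iff.mp (by omega)
    subst hw
    obtain ⟨hE, hq1 | he1⟩ := inv_s0 hacc
    · obtain ⟨u, v, hu, he, _⟩ := inv_q1 hq1
      have := congrArg List.length he
      simp at this
    · obtain ⟨v, he, _⟩ := inv_front .e1 Letter.a .e2 rfl rfl dE1 he1
      simp at he
  | succ N ih =>
    intro w hlen hacc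
    obtain ⟨hE, hq1 | he1⟩ := inv_s0 hacc
    · -- one full cycle
      obtain ⟨u1, v1, hu1, hw1, hp1⟩ := inv_q1 hq1
      obtain ⟨k, hk⟩ := instar_aa.mp hu1
      subst hk
      subst hw1
      obtain ⟨w2, hv2, hq2⟩ := inv_front .p1 Letter.a .q2 rfl rfl dP1 hp1
      rcases Nat.eq_zero_or_pos k with hk0 | hkpos
      · -- k = 0 : the word starts with b followed by a, impossible
        exfalso
        subst hk0
        simp only [Nat.mul_zero, List.replicate_zero, List.nil_append] at hv2 hE
        subst hv2
        exact instar_E_no_ba (k := 0) (by simpa using hE)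
      · have hw2 : w2 = List.replicate (2*k-1) Letter.a ++ v1 := by
          have h' := hv2
          rw [show 2*k = (2*k-1)+1 by omega, List.replicate_succ, List.cons_append] at h'
          injection h' with _ h''
          exact h''.symm
        obtain ⟨u2, v2, hu2, hw2e, hp2⟩ := inv_q2 hq2
        obtain ⟨w3, hv3, hs0'⟩ := inv_front .p2 Letter.a .s0 rfl rfl dP2 hp2
        -- length bookkeeping
        have hlw3 : w3.length ≤ N := by
          have l0 := hlen
          simp only [List.length_append, List.length_replicate, List.length_cons] at l0
          have l2 := congrArg List.length hw2
          have l3 := congrArg List.length hw2e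
          have l4 := congrArg List.length hv3
          simp only [List.length_append, List.length_replicate, List.length_cons] at l2 l3 l4
          omega
        obtain ⟨m, hm, hw3g⟩ := ih w3 hlw3 hs0'
        subst hw3g
        -- analyse u2
        obtain ⟨l, hl, hfl⟩ := hu2
        have hl' : ∀ x ∈ l, x = [Letter.a, Letter.a] ∨ x = [Letter.a, Letter.b] := by
          intro x hx
          simpa [tlM] using hl x hx
        have hagen : Letter.a :: gen m
            = List.replicate (2*m+1) Letter.a ++ List.replicate (2*m) Letter.b := by
          rw [gen, List.replicate_succ, List.cons_append]
        have heq : l.flatten ++ v2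
            = List.replicate (2*m+1) Letter.a ++ List.replicate (2*m) Letter.b := by
          rw [hfl, hv3, hagen]
        rcases AB_star_shape l hl' (2*m+1) (2*m) v2 heq with ⟨t, hu2e, hti⟩ | ⟨hu2e, _, _⟩
        · -- u2 is a block of a's : leads to a `ba` pattern, contradiction
          exfalso
          rw [hfl] at hu2e
          have hv2e : v2 = List.replicate (2*m+1-2*t) Letter.a
              ++ List.replicate (2*m) Letter.b := by
            refine rep_cancel hti ?_
            rw [← hu2e, hv3, hagen]
          have hsplit := rep_split (2*k-1) (2*t) v1 v2 (by rw [← hw2, hw2e, hu2e])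
          obtain ⟨hle, hv1e⟩ := hsplit
          have hs1 : 1 ≤ 2*t - (2*k-1) := by omega
          rw [show 2*t - (2*k-1) = (2*t - (2*k-1) - 1) + 1 by omega,
            List.replicate_succ, List.cons_append] at hv1e
          subst hv1e
          exact instar_E_no_ba (k := 2*k) hE
        · -- u2 covers the whole a-block : the good case
          rw [hfl] at hu2e
          have hv2e : v2 = List.replicate (2*m-1) Letter.b := by
            have h' : u2 ++ v2 = List.replicate (2*m+1) Letter.a
                ++ List.replicate (2*m) Letter.b := by rw [hv3, hagen]
            rw [hu2e, List.append_assoc] at h'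
            have h2 := List.append_cancel_left h'
            rw [show 2*m = (2*m-1)+1 by omega, List.replicate_succ] at h2
            simp only [List.singleton_append, List.cons.injEq] at h2
            exact h2.2
          have hw2' : w2 = List.replicate (2*m+1) Letter.a
              ++ (Letter.b :: List.replicate (2*m) Letter.b) := by
            rw [hw2e, hu2e, hv2e, List.append_assoc]
            congr 1
            rw [show 2*m = (2*m-1)+1 by omega, List.replicate_succ]
            rfl
          have hsplit := rep_split (2*k-1) (2*m+1) v1
            (List.replicate (2*m) Letter.b) (by rw [← hw2, hw2'])
          obtain ⟨hle, hv1e⟩ := hsplit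
          rcases Nat.eq_zero_or_pos (2*m+1 - (2*k-1)) with hs0 | hs1
          · -- v1 is all b's : w = gen (m+1)
            rw [hs0, List.replicate_zero, List.nil_append] at hv1e
            subst hv1e
            have hk' : k = m+1 := by omega
            subst hk'
            refine ⟨m+1, by omega, ?_⟩
            rw [gen, show 2*(m+1) = 2 + 2*m by ring, List.replicate_add, List.replicate_add]
            rfl
          · -- again a `ba` pattern, contradiction
            exfalso
            rw [show 2*m+1 - (2*k-1) = (2*m+1 - (2*k-1) - 1) + 1 by omega,
              List.replicate_succ, List.cons_append] at hv1e
            subst hv1e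
            exact instar_E_no_ba (k := 2*k) hE
    · -- the exit branch : w = aabb
      obtain ⟨v1, he1e, h2⟩ := inv_front .e1 Letter.a .e2 rfl rfl dE1 he1
      obtain ⟨v2, he2e, h3⟩ := inv_front .e2 Letter.a .e3 rfl rfl dE2 h2
      obtain ⟨v3, he3e, h4⟩ := inv_front .e3 Letter.b .e4 rfl rfl dE3 h3
      obtain ⟨v4, he4e, h5⟩ := inv_front .e4 Letter.b .e5 rfl rfl dE4 h4
      have hv4 := inv_e5 h5
      subst hv4
      exact ⟨1, le_refl 1, by rw [he1e, he2e, he3e, he4e, gen_one]⟩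

theorem M_lang : M.lang = L2lin := by
  ext w
  constructor
  · rintro ⟨q0, hq0, hrun⟩
    simp only [M_init, Set.mem_singleton_iff] at hq0
    subst hq0
    obtain ⟨n, hn, rfl⟩ := bwd w.length w le_rfl hrun
    exact ⟨n, hn, rfl⟩
  · rintro ⟨n, hn, rfl⟩
    exact ⟨.s0, rfl, fwd n hn⟩

theorem L2lin_RNFAwtw : AcceptedByRNFAwtw L2lin :=
  ⟨St, inferInstance, M, M_lang⟩


/-- The class of NFAwtw languages is properly contained in the class of
RNFAwtw languages: every NFAwtw language is an RNFAwtw language, and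
`L_2lin = { a^{2n} b^{2n} : n ≥ 1 }` is an RNFAwtw language that is not an
NFAwtw language. -/
theorem NFAwtw_lt_RNFAwtw :
    (∀ (α : Type), Finite α →
      ∀ L : Set (List α), AcceptedByNFAwtw L → AcceptedByRNFAwtw L) ∧
    AcceptedByRNFAwtw L2lin ∧ ¬ AcceptedByNFAwtw L2lin := by
  refine ⟨?_, L2lin_RNFAwtw, L2lin_not_NFAwtw⟩
  rintro α _ L ⟨Q, finQ, A, _, hL⟩
  exact ⟨Q, finQ, A, hL⟩
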